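/- For σ ∈ ℝ_+^{|X|}, the function f(p) := −Σ_x p_x σ_x sqrt(−2 ln p_x) is strictly convex and continuously differentiable on the interior of the simplex, and for any π in the probability simplex and the maximizer π̃ of V over the simplex, the Bregman divergence satisfies D_σ(π, π̃) = V(π̃) − V(π). -/

import Mathlib

/-- The VBOS objective `V(p) = Σ_x p_x (μ_x + σ_x sqrt(−2 ln p_x))`. -/
noncomputable def vbos {X : Type*} [Fintype X] (μ σ : X → ℝ) (p : X → ℝ) : ℝ :=
  ∑ x, p x * (μ x + σ x * Real.sqrt (-2 * Real.log (p x)))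

/-- `f(p) := −Σ_x p_x σ_x sqrt(−2 ln p_x)`. -/
noncomputable def fBreg {X : Type*} [Fintype X] (σ : X → ℝ) (p : X → ℝ) : ℝ :=
  -∑ x, p x * σ x * Real.sqrt (-2 * Real.log (p x))

/-- The Bregman divergence of `f`: `D(p,q) = f(p) − f(q) − ⟨∇f(q), p − q⟩`. -/
noncomputable def bregman {X : Type*} [Fintype X] (σ : X → ℝ) (p q : X → ℝ) : ℝ :=
  fBreg σ p - fBreg σ q - fderiv ℝ (fBreg σ) q (p - q)

open Set

private lemma alg1 (s t c : ℝ) (hs : s ≠ 0) (ht : t ≠ 0) :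
    -(1 * c * s + t * c * (1 / (2 * s) * (-2 * t⁻¹))) = c / s - c * s := by
  field_simp; ring

private lemma alg2 (s t c u : ℝ) (hs : s ≠ 0) (ht : t ≠ 0) (hu : u = s ^ 2) :
    (0 * s - c * (1 / (2 * s) * (-2 * t⁻¹))) / s ^ 2 - c * (1 / (2 * s) * (-2 * t⁻¹))
      = c / (t * u * s) + c / (t * s) := by
  subst hu; field_simp; ring

lemma sqrt_neg_log_pos {t : ℝ} (ht : 0 < t) (ht1 : t < 1) : 0 < Real.sqrt (-2 * Real.log t) := by
  have : 0 < -2 * Real.log t := by nlinarith [Real.log_neg ht ht1]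
  exact Real.sqrt_pos.2 this

lemma hasDerivAt_phi (c : ℝ) {t : ℝ} (ht : 0 < t) (ht1 : t < 1) :
    HasDerivAt (fun t : ℝ => -(t * c * Real.sqrt (-2 * Real.log t)))
      (c / Real.sqrt (-2 * Real.log t) - c * Real.sqrt (-2 * Real.log t)) t := by
  have hs := sqrt_neg_log_pos ht ht1
  have hu : 0 < -2 * Real.log t := Real.sqrt_pos.1 hs
  have hlog : HasDerivAt (fun t : ℝ => -2 * Real.log t) (-2 * t⁻¹) t :=
    (Real.hasDerivAt_log ht.ne').const_mul (-2)
  have hsq : HasDerivAt (fun t : ℝ => Real.sqrt (-2 * Real.log t))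
      (1 / (2 * Real.sqrt (-2 * Real.log t)) * (-2 * t⁻¹)) t :=
    (Real.hasDerivAt_sqrt hu.ne').comp t hlog
  have h := (((hasDerivAt_id t).mul_const c).mul hsq).neg
  simp only [id_eq] at h
  rwa [alg1 _ _ _ hs.ne' ht.ne'] at h

lemma hasDerivAt_psi (c : ℝ) {t : ℝ} (ht : 0 < t) (ht1 : t < 1) :
    HasDerivAt (fun t : ℝ => c / Real.sqrt (-2 * Real.log t) - c * Real.sqrt (-2 * Real.log t))
      (c / (t * (-2 * Real.log t) * Real.sqrt (-2 * Real.log t))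
        + c / (t * Real.sqrt (-2 * Real.log t))) t := by
  have hs := sqrt_neg_log_pos ht ht1
  have hu : 0 < -2 * Real.log t := Real.sqrt_pos.1 hs
  have hlog : HasDerivAt (fun t : ℝ => -2 * Real.log t) (-2 * t⁻¹) t :=
    (Real.hasDerivAt_log ht.ne').const_mul (-2)
  have hsq : HasDerivAt (fun t : ℝ => Real.sqrt (-2 * Real.log t))
      (1 / (2 * Real.sqrt (-2 * Real.log t)) * (-2 * t⁻¹)) t :=
    (Real.hasDerivAt_sqrt hu.ne').comp t hlog
  have h := ((hasDerivAt_const t c).div hsq hs.ne').sub (hsq.const_mul c)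
  rwa [alg2 _ _ _ _ hs.ne' ht.ne' (Real.sq_sqrt hu.le).symm] at h

lemma phi_strictConvexOn (c : ℝ) (hc : 0 < c) :
    StrictConvexOn ℝ (Ioc (0:ℝ) 1) (fun t : ℝ => -(t * c * Real.sqrt (-2 * Real.log t))) := by
  apply strictConvexOn_of_deriv2_pos (convex_Ioc 0 1)
  · apply ContinuousOn.neg
    apply ContinuousOn.mul
    · exact (continuousOn_id.mul continuousOn_const)
    · apply Real.continuous_sqrt.comp_continuousOn
      exact continuousOn_const.mul (Real.continuousOn_log.mono (fun x hx => ne_of_gt hx.1))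
  · intro t ht
    rw [interior_Ioc] at ht
    have hs := sqrt_neg_log_pos ht.1 ht.2
    have hu : 0 < -2 * Real.log t := Real.sqrt_pos.1 hs
    have hev : (deriv (fun t : ℝ => -(t * c * Real.sqrt (-2 * Real.log t))))
        =ᶠ[nhds t] (fun t : ℝ => c / Real.sqrt (-2 * Real.log t)
          - c * Real.sqrt (-2 * Real.log t)) := by
      filter_upwards [Ioo_mem_nhds ht.1 ht.2] with s hsm
      exact (hasDerivAt_phi c hsm.1 hsm.2).deriv
    have : deriv^[2] (fun t : ℝ => -(t * c * Real.sqrt (-2 * Real.log t))) t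
        = c / (t * (-2 * Real.log t) * Real.sqrt (-2 * Real.log t))
          + c / (t * Real.sqrt (-2 * Real.log t)) := by
      simp only [Function.iterate_succ, Function.iterate_zero, Function.comp_apply, id_eq]
      rw [hev.deriv_eq]
      exact (hasDerivAt_psi c ht.1 ht.2).deriv
    rw [this]
    have h1 : 0 < c / (t * (-2 * Real.log t) * Real.sqrt (-2 * Real.log t)) :=
      div_pos hc (mul_pos (mul_pos ht.1 hu) hs)
    have h2 : 0 < c / (t * Real.sqrt (-2 * Real.log t)) := div_pos hc (mul_pos ht.1 hs)
    linarith

section Parts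
variable {X : Type*} [Fintype X]

lemma mem_Ioc_of_simplex {p : X → ℝ} (hp : p ∈ stdSimplex ℝ X) (hpos : ∀ x, 0 < p x) (x : X) :
    p x ∈ Ioc (0:ℝ) 1 := by
  refine ⟨hpos x, ?_⟩
  have := Finset.single_le_sum (f := p) (fun i _ => hp.1 i) (Finset.mem_univ x)
  rwa [hp.2] at this

lemma simplex_le_one {p : X → ℝ} (hp : p ∈ stdSimplex ℝ X) (x : X) : p x ≤ 1 := by
  have := Finset.single_le_sum (f := p) (fun i _ => hp.1 i) (Finset.mem_univ x)
  rwa [hp.2] at this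

lemma fBreg_eq_sum (σ : X → ℝ) (p : X → ℝ) :
    fBreg σ p = ∑ x, -(p x * σ x * Real.sqrt (-2 * Real.log (p x))) := by
  simp [fBreg]

lemma fBreg_strictConvexOn (σ : X → ℝ) (hσ : ∀ x, 0 < σ x) :
    StrictConvexOn ℝ {p ∈ stdSimplex ℝ X | ∀ x, 0 < p x} (fBreg σ) := by
  set S := {p ∈ stdSimplex ℝ X | ∀ x, 0 < p x} with hS
  have hconv : Convex ℝ S := by
    intro p hp q hq a b ha hb hab
    refine ⟨convex_stdSimplex ℝ X hp.1 hq.1 ha hb hab, fun x => ?_⟩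
    rcases eq_or_lt_of_le ha with h | h
    · simp only [Pi.add_apply, Pi.smul_apply, smul_eq_mul, ← h]
      have hb1 : b = 1 := by linarith
      simpa [hb1] using hq.2 x
    · have : 0 < a * p x := mul_pos h (hp.2 x)
      have : 0 ≤ b * q x := mul_nonneg hb (hq.2 x).le
      simp only [Pi.add_apply, Pi.smul_apply, smul_eq_mul]
      linarith
  refine ⟨hconv, ?_⟩
  intro p hp q hq hpq a b ha hb hab
  simp only [smul_eq_mul]
  rw [fBreg_eq_sum, fBreg_eq_sum, fBreg_eq_sum, Finset.mul_sum, Finset.mul_sum,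
    ← Finset.sum_add_distrib]
  obtain ⟨x0, hx0⟩ := Function.ne_iff.1 hpq
  apply Finset.sum_lt_sum
  · intro x _
    have h := ((phi_strictConvexOn (σ x) (hσ x)).convexOn).2
      (mem_Ioc_of_simplex hp.1 hp.2 x) (mem_Ioc_of_simplex hq.1 hq.2 x) ha.le hb.le hab
    simpa using h
  · refine ⟨x0, Finset.mem_univ x0, ?_⟩
    have h := (phi_strictConvexOn (σ x0) (hσ x0)).2
      (mem_Ioc_of_simplex hp.1 hp.2 x0) (mem_Ioc_of_simplex hq.1 hq.2 x0) hx0 ha hb hab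
    simpa using h

lemma contDiffAt_fBreg (σ : X → ℝ) {p : X → ℝ}
    (hpos : ∀ x, 0 < p x) (hlt : ∀ x, p x < 1) : ContDiffAt ℝ 1 (fBreg σ) p := by
  have : ContDiffAt ℝ 1 (fun q : X → ℝ => ∑ x, q x * σ x * Real.sqrt (-2 * Real.log (q x))) p := by
    apply ContDiffAt.sum
    intro x _
    have hx1 : ContDiffAt ℝ 1 (fun q : X → ℝ => q x) p :=
      (ContinuousLinearMap.proj x : (X → ℝ) →L[ℝ] ℝ).contDiff.contDiffAt
    have hlogne : Real.log (p x) ≠ 0 := by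
      have := Real.log_neg (hpos x) (hlt x)
      linarith
    have hlog : ContDiffAt ℝ 1 (fun q : X → ℝ => -2 * Real.log (q x)) p :=
      ((Real.contDiffAt_log.2 (hpos x).ne').comp p hx1).const_smul (-2 : ℝ)
        |>.congr_of_eventuallyEq (by filter_upwards with q; simp [smul_eq_mul])
    have hsqrt : ContDiffAt ℝ 1 (fun q : X → ℝ => Real.sqrt (-2 * Real.log (q x))) p :=
      (Real.contDiffAt_sqrt (mul_ne_zero (by norm_num) hlogne)).comp p hlog
    exact (hx1.mul contDiffAt_const).mul hsqrt
  exact this.neg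

lemma fBreg_contDiffOn (σ : X → ℝ) :
    ContDiffOn ℝ 1 (fBreg σ) {p ∈ stdSimplex ℝ X | ∀ x, 0 < p x} := by
  classical
  intro p hp
  by_cases hlt : ∀ x, p x < 1
  · exact (contDiffAt_fBreg σ hp.2 hlt).contDiffWithinAt
  · push_neg at hlt
    obtain ⟨x0, hx0⟩ := hlt
    have hx0' : p x0 = 1 := le_antisymm (simplex_le_one hp.1 x0) hx0
    have hall : ∀ x, x = x0 := by
      intro x
      by_contra hne
      have h1 := Finset.add_sum_erase Finset.univ p (Finset.mem_univ x0)
      have h2 : p x ≤ ∑ y ∈ Finset.univ.erase x0, p y :=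
        Finset.single_le_sum (f := p) (fun i _ => hp.1.1 i)
          (Finset.mem_erase.2 ⟨hne, Finset.mem_univ x⟩)
      have h3 := hp.1.2
      have := hp.2 x
      rw [← h1, hx0'] at h3
      linarith
    have huniv : (Finset.univ : Finset X) = {x0} := by
      ext y; simp [hall y]
    have hzero : ∀ q ∈ {p ∈ stdSimplex ℝ X | ∀ x, 0 < p x}, fBreg σ q = 0 := by
      intro q hq
      have hq1 : q x0 = 1 := by
        have := hq.1.2
        rwa [huniv, Finset.sum_singleton] at this
      rw [fBreg, huniv, Finset.sum_singleton, hq1, Real.log_one]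
      simp
    exact (contDiffWithinAt_const (c := 0)).congr hzero (hzero p hp)

private lemma sum_double_update [DecidableEq X] (G : X → ℝ → ℝ)
    (g : X → ℝ) {x0 y : X} (hxy : y ≠ x0) (a b : ℝ) :
    ∑ x, G x (Function.update (Function.update g y b) x0 a x)
      = (∑ x, G x (g x)) - G x0 (g x0) - G y (g y) + G x0 a + G y b := by
  have h1 : ∀ (g' : X → ℝ) (i : X) (c : ℝ),
      (fun x => G x (Function.update g' i c x))
        = Function.update (fun x => G x (g' x)) i (G i c) := by
    intro g' i c; funext x
    exact Function.apply_update (fun j t => G j t) g' i c x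
  have hy : y ∈ (Finset.univ : Finset X).erase x0 :=
    Finset.mem_erase.2 ⟨hxy, Finset.mem_univ y⟩
  calc ∑ x, G x (Function.update (Function.update g y b) x0 a x)
      = ∑ x, Function.update (fun x => G x (Function.update g y b x)) x0 (G x0 a) x := by
        rw [← h1]
    _ = G x0 a + ∑ x ∈ Finset.univ.erase x0, G x (Function.update g y b x) := by
        rw [Finset.sum_update_of_mem (Finset.mem_univ x0), Finset.sdiff_singleton_eq_erase]
    _ = G x0 a + ∑ x ∈ Finset.univ.erase x0,
          Function.update (fun x => G x (g x)) y (G y b) x := by rw [h1]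
    _ = G x0 a + (G y b + ∑ x ∈ (Finset.univ.erase x0).erase y, G x (g x)) := by
        rw [Finset.sum_update_of_mem hy, Finset.sdiff_singleton_eq_erase]
    _ = (∑ x, G x (g x)) - G x0 (g x0) - G y (g y) + G x0 a + G y b := by
        rw [← Finset.add_sum_erase _ (fun x => G x (g x)) (Finset.mem_univ x0),
          ← Finset.add_sum_erase _ (fun x => G x (g x)) hy]
        ring

lemma maximizer_pos (μ σ : X → ℝ) (hσ : ∀ x, 0 < σ x) (πt : X → ℝ)
    (hπt : πt ∈ stdSimplex ℝ X) (hmax : IsMaxOn (vbos μ σ) (stdSimplex ℝ X) πt) :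
    ∀ x, 0 < πt x := by
  classical
  intro x0
  by_contra hneg
  push_neg at hneg
  have h0 : πt x0 = 0 := le_antisymm hneg (hπt.1 x0)
  have hy : ∃ y, 0 < πt y := by
    by_contra h
    push_neg at h
    have hz : ∀ y, πt y = 0 := fun y => le_antisymm (h y) (hπt.1 y)
    have := hπt.2
    rw [Finset.sum_congr rfl (fun y _ => hz y)] at this
    simp at this
  obtain ⟨y, hy0⟩ := hy
  have hxy : y ≠ x0 := fun h => by rw [h, h0] at hy0; exact lt_irrefl 0 hy0
  set t₀ := πt y with ht₀def
  have ht₀1 : t₀ ≤ 1 := simplex_le_one hπt y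
  set D := Real.sqrt (-2 * Real.log t₀) with hDdef
  have hD0 : 0 ≤ D := Real.sqrt_nonneg _
  set C := |μ x0| + |μ y| + σ y * D with hCdef
  have hC0 : 0 ≤ C :=
    add_nonneg (add_nonneg (abs_nonneg _) (abs_nonneg _)) (mul_nonneg (hσ y).le hD0)
  set s := C / σ x0 with hsdef
  have hs0 : 0 ≤ s := div_nonneg hC0 (hσ x0).le
  have hCs : σ x0 * s = C := mul_div_cancel₀ C (hσ x0).ne'
  set ε := min (t₀ / 2) (Real.exp (-((s + 1) ^ 2) / 2)) with hεdef
  have hεpos : 0 < ε := lt_min (by linarith) (Real.exp_pos _)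
  have hε2 : ε ≤ t₀ / 2 := min_le_left _ _
  have hεlog : Real.log ε ≤ -((s + 1) ^ 2) / 2 := by
    rw [Real.log_le_iff_le_exp hεpos]
    exact min_le_right _ _
  set A := Real.sqrt (-2 * Real.log ε) with hAdef
  have hsq : s + 1 ≤ A := by
    rw [hAdef, show s + 1 = Real.sqrt ((s + 1) ^ 2) from (Real.sqrt_sq (by positivity)).symm]
    apply Real.sqrt_le_sqrt
    nlinarith
  set B := Real.sqrt (-2 * Real.log (t₀ - ε)) with hBdef
  have hBD : D ≤ B := by
    apply Real.sqrt_le_sqrt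
    have : Real.log (t₀ - ε) ≤ Real.log t₀ :=
      (Real.log_le_log_iff (by linarith) hy0).2 (by linarith)
    linarith
  set q := Function.update (Function.update πt y (t₀ - ε)) x0 ε with hqdef
  have hmem : q ∈ stdSimplex ℝ X := by
    constructor
    · intro x
      rcases eq_or_ne x x0 with rfl | hx1
      · simp [hqdef, Function.update_self]; linarith
      rcases eq_or_ne x y with rfl | hx2
      · rw [hqdef, Function.update_of_ne hx1, Function.update_self]; linarith
      · rw [hqdef, Function.update_of_ne hx1, Function.update_of_ne hx2]; exact hπt.1 x
    · have := sum_double_update (fun _ t => t) πt hxy ε (t₀ - ε)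
      rw [← hqdef] at this
      rw [this, hπt.2, h0]
      ring
  have hqv := sum_double_update (fun x t => t * (μ x + σ x * Real.sqrt (-2 * Real.log t)))
      πt hxy ε (t₀ - ε)
  rw [← hqdef] at hqv
  have hle : vbos μ σ q ≤ vbos μ σ πt := hmax hmem
  rw [vbos, vbos, hqv] at hle
  have h1 : ε * σ x0 * (s + 1) ≤ ε * σ x0 * A :=
    mul_le_mul_of_nonneg_left hsq (mul_nonneg hεpos.le (hσ x0).le)
  have h2 : (t₀ - ε) * σ y * D ≤ (t₀ - ε) * σ y * B :=
    mul_le_mul_of_nonneg_left hBD (by nlinarith [(hσ y).le])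
  have h3 : ε * -|μ x0| ≤ ε * μ x0 := mul_le_mul_of_nonneg_left (neg_abs_le _) hεpos.le
  have h4 : ε * μ y ≤ ε * |μ y| := mul_le_mul_of_nonneg_left (le_abs_self _) hεpos.le
  rw [h0] at hle
  nlinarith [hle, hσ x0, hσ y, hεpos]

lemma bregman_key [Nonempty X] (μ σ : X → ℝ) (πt : X → ℝ)
    (hπt : πt ∈ stdSimplex ℝ X) (hmax : IsMaxOn (vbos μ σ) (stdSimplex ℝ X) πt)
    (hpos : ∀ x, 0 < πt x) (hlt : ∀ x, πt x < 1) (pp : X → ℝ) (hπ : pp ∈ stdSimplex ℝ X) :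
    fBreg σ pp - fBreg σ πt - fderiv ℝ (fBreg σ) πt (pp - πt) = vbos μ σ πt - vbos μ σ pp := by
  classical
  set L : (X → ℝ) →L[ℝ] ℝ := ∑ x, μ x • (ContinuousLinearMap.proj x : (X → ℝ) →L[ℝ] ℝ) with hLdef
  have hLval : ∀ v : X → ℝ, L v = ∑ x, v x * μ x := by
    intro v
    simp [hLdef, ContinuousLinearMap.sum_apply, ContinuousLinearMap.smul_apply,
      ContinuousLinearMap.proj_apply, smul_eq_mul, mul_comm]
  have vbos_split : ∀ p : X → ℝ, vbos μ σ p = (∑ x, p x * μ x) - fBreg σ p := by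
    intro p
    rw [vbos, fBreg, sub_neg_eq_add, ← Finset.sum_add_distrib]
    apply Finset.sum_congr rfl
    intros; ring
  have hdiff : DifferentiableAt ℝ (fBreg σ) πt :=
    (contDiffAt_fBreg σ hpos hlt).differentiableAt one_ne_zero
  set F := fderiv ℝ (fBreg σ) πt with hFdef
  have hfB : HasFDerivAt (fBreg σ) F πt := hdiff.hasFDerivAt
  have hW : HasFDerivAt (fun p : X → ℝ => ∑ x, p x * μ x) L πt := by
    have he : (fun p : X → ℝ => ∑ x, p x * μ x) = ⇑L := by
      funext p; rw [hLval]
    rw [he]; exact L.hasFDerivAt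
  have hV : HasFDerivAt (vbos μ σ) (L - F) πt := by
    have he : vbos μ σ = fun p => (∑ x, p x * μ x) - fBreg σ p := funext vbos_split
    rw [he]; exact hW.sub hfB
  set v : X → ℝ := pp - πt with hvdef
  have hvx : ∀ x, v x = pp x - πt x := fun x => rfl
  have hline : HasDerivAt (fun t : ℝ => πt + t • v) v 0 := by
    simpa using (((hasDerivAt_id (0 : ℝ)).smul_const v).const_add πt)
  have hl : HasFDerivAt (vbos μ σ) (L - F) ((fun t : ℝ => πt + t • v) 0) := by
    simpa using hV
  have hcomp : HasDerivAt (fun t : ℝ => vbos μ σ (πt + t • v)) ((L - F) v) 0 :=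
    hl.comp_hasDerivAt (l := vbos μ σ) (f := fun t : ℝ => πt + t • v) 0 hline
  set δ := Finset.univ.inf' Finset.univ_nonempty πt with hδdef
  have hδpos : 0 < δ := (Finset.lt_inf'_iff _).2 fun x _ => hpos x
  have hδle : ∀ x, δ ≤ πt x := fun x => Finset.inf'_le _ (Finset.mem_univ x)
  have hbound : ∀ x, |v x| ≤ 1 := by
    intro x
    rw [hvx]
    have h1 := hπ.1 x
    have h2 := simplex_le_one hπ x
    have h3 := hπt.1 x
    have h4 := simplex_le_one hπt x
    rw [abs_le]; constructor <;> linarith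
  have hmemnear : ∀ t : ℝ, |t| < δ → πt + t • v ∈ stdSimplex ℝ X := by
    intro t ht
    constructor
    · intro x
      have h1 : |t * v x| ≤ |t| := by
        rw [abs_mul]; exact mul_le_of_le_one_right (abs_nonneg t) (hbound x)
      have h2 := neg_abs_le (t * v x)
      have h3 := hδle x
      simp only [Pi.add_apply, Pi.smul_apply, smul_eq_mul]
      linarith
    · have hsum : ∑ x, (πt x + t * v x) = (∑ x, πt x) + t * ∑ x, v x := by
        rw [Finset.sum_add_distrib, Finset.mul_sum]
      simp only [Pi.add_apply, Pi.smul_apply, smul_eq_mul]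
      rw [hsum]
      have hv0 : ∑ x, v x = 0 := by
        simp only [hvx]
        rw [Finset.sum_sub_distrib, hπ.2, hπt.2, sub_self]
      rw [hv0, hπt.2]; ring
  have hloc : IsLocalMax (fun t : ℝ => vbos μ σ (πt + t • v)) 0 := by
    filter_upwards [Ioo_mem_nhds (by linarith : -δ < 0) hδpos] with t ht
    have := hmax (hmemnear t (abs_lt.2 ⟨ht.1, ht.2⟩))
    simpa using this
  have hzero : (L - F) v = 0 := hloc.hasDerivAt_eq_zero hcomp
  have hFv : F v = ∑ x, v x * μ x := by
    rw [ContinuousLinearMap.sub_apply] at hzero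
    rw [← hLval]
    linarith
  have hsplit : (∑ x, v x * μ x) = (∑ x, pp x * μ x) - ∑ x, πt x * μ x := by
    rw [← Finset.sum_sub_distrib]
    apply Finset.sum_congr rfl
    intros x _; rw [hvx]; ring
  rw [vbos_split pp, vbos_split πt, hFv, hsplit]
  ring

end Parts

/-- For positive `σ`, `f(p) = −Σ_x p_x σ_x sqrt(−2 ln p_x)` is strictly convex and
continuously differentiable on the (relative) interior of the simplex, and for any `π` in the
probability simplex and `π̃` the maximizer of the VBOS objective `V` over the simplex,
`D_σ(π, π̃) = V(π̃) − V(π)`. -/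
theorem stmt_6 {X : Type*} [Fintype X] [Nonempty X] (μ σ : X → ℝ) (hσ : ∀ x, 0 < σ x)
    (πt : X → ℝ) (hπt : πt ∈ stdSimplex ℝ X)
    (hmax : IsMaxOn (vbos μ σ) (stdSimplex ℝ X) πt) :
    StrictConvexOn ℝ {p ∈ stdSimplex ℝ X | ∀ x, 0 < p x} (fBreg σ) ∧
      ContDiffOn ℝ 1 (fBreg σ) {p ∈ stdSimplex ℝ X | ∀ x, 0 < p x} ∧
      ∀ π ∈ stdSimplex ℝ X, bregman σ π πt = vbos μ σ πt - vbos μ σ π := by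
  classical
  refine ⟨fBreg_strictConvexOn σ hσ, fBreg_contDiffOn σ, ?_⟩
  intro π hπ
  have hpos := maximizer_pos μ σ hσ πt hπt hmax
  by_cases hlt : ∀ x, πt x < 1
  · exact bregman_key μ σ πt hπt hmax hpos hlt π hπ
  · push_neg at hlt
    obtain ⟨x0, hx0⟩ := hlt
    have hx0' : πt x0 = 1 := le_antisymm (simplex_le_one hπt x0) hx0
    have hall : ∀ x, x = x0 := by
      intro x
      by_contra hne
      have h1 := Finset.add_sum_erase Finset.univ πt (Finset.mem_univ x0)
      have h2 : πt x ≤ ∑ y ∈ Finset.univ.erase x0, πt y :=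
        Finset.single_le_sum (f := πt) (fun i _ => hπt.1 i)
          (Finset.mem_erase.2 ⟨hne, Finset.mem_univ x⟩)
      have h3 := hπt.2
      rw [← h1, hx0'] at h3
      have := hpos x
      linarith
    have huniv : (Finset.univ : Finset X) = {x0} := by ext y; simp [hall y]
    have hπ1 : π x0 = 1 := by
      have := hπ.2
      rwa [huniv, Finset.sum_singleton] at this
    have hππt : π = πt := by
      funext x
      rw [hall x, hπ1, hx0']
    rw [hππt]
    simp [bregman]
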